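/- In the value-permutation model, the dual Burnside kernel Q is strongly lumpable with respect to the partition of S_k* by the number of fixed symbols: for all g₁, g₂ ∈ S_k* with f(g₁) = f(g₂) and every integer s ≥ 1, ∑_{h ∈ S_k, f(h) = s} Q(g₁,h) = ∑_{h ∈ S_k, f(h) = s} Q(g₂,h). -/

import Mathlib

open Finset

noncomputable section

variable (n k : ℕ)

/-- Fixed words of `g ∈ S_k` under the value-permutation action on `[k]^n`:
`X_g = {x : g ∘ x = x}`. -/
def fixedWords (g : Equiv.Perm (Fin k)) : Finset (Fin n → Fin k) :=
  Finset.univ.filter fun x => (fun i => g (x i)) = x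

/-- Stabilizer of a word `x ∈ [k]^n` under the value-permutation action. -/
def stabWord (x : Fin n → Fin k) : Finset (Equiv.Perm (Fin k)) :=
  Finset.univ.filter fun g => (fun i => g (x i)) = x

/-- Number of fixed symbols `f(g) = |Fix(g)|` of `g ∈ S_k`. -/
def numFix (g : Equiv.Perm (Fin k)) : ℕ :=
  (Finset.univ.filter fun a : Fin k => g a = a).card

/-- The dual Burnside kernel for the value-permutation model `S_k ↷ [k]^n`. -/
def Q (g h : Equiv.Perm (Fin k)) : ℝ :=
  ∑ x ∈ fixedWords n k g ∩ fixedWords n k h,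
    1 / (((fixedWords n k g).card : ℝ) * ((stabWord n k x).card : ℝ))

lemma mem_fixedWords {g : Equiv.Perm (Fin k)} {x : Fin n → Fin k} :
    x ∈ fixedWords n k g ↔ ∀ i, g (x i) = x i := by
  simp [fixedWords, funext_iff]

lemma mem_stabWord {g : Equiv.Perm (Fin k)} {x : Fin n → Fin k} :
    g ∈ stabWord n k x ↔ ∀ i, g (x i) = x i := by
  simp [stabWord, funext_iff]

/-- Conjugation preserves the number of fixed symbols. -/
lemma numFix_conj (σ h : Equiv.Perm (Fin k)) :
    numFix k (σ * h * σ⁻¹) = numFix k h := by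
  unfold numFix
  apply Finset.card_nbij' (fun a => σ⁻¹ a) (fun a => σ a)
  · intro a ha
    rw [Finset.mem_coe, Finset.mem_filter] at ha ⊢
    simp only [Finset.mem_filter, Finset.mem_univ, true_and, Equiv.Perm.mul_apply] at ha ⊢
    apply σ.injective
    simpa using ha
  · intro a ha
    rw [Finset.mem_coe, Finset.mem_filter] at ha ⊢
    simp only [Finset.mem_filter, Finset.mem_univ, true_and, Equiv.Perm.mul_apply] at ha ⊢
    simp [ha]
  · intro a _; simp
  · intro a _; simp

/-- The stabilizer of `σ ∘ x` has the same cardinality as the stabilizer of `x`. -/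
lemma stabWord_card_comp (σ : Equiv.Perm (Fin k)) (x : Fin n → Fin k) :
    (stabWord n k (fun i => σ (x i))).card = (stabWord n k x).card := by
  apply Finset.card_nbij' (fun g => σ⁻¹ * g * σ) (fun g => σ * g * σ⁻¹)
  · intro g hg
    simp only [Finset.mem_coe, mem_stabWord, Equiv.Perm.mul_apply] at hg ⊢
    intro i
    rw [hg i]; simp
  · intro g hg
    simp only [Finset.mem_coe, mem_stabWord, Equiv.Perm.mul_apply] at hg ⊢
    intro i
    simp [hg i]
  · intro g _; group
  · intro g _; group

/-- If `σ` carries `Fix g₁` onto `Fix g₂`, the fixed-word sets have equal cardinality. -/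
lemma fixedWords_card_eq (σ g₁ g₂ : Equiv.Perm (Fin k))
    (hσ : ∀ a, g₂ (σ a) = σ a ↔ g₁ a = a) :
    (fixedWords n k g₂).card = (fixedWords n k g₁).card := by
  apply Finset.card_nbij' (fun x i => σ⁻¹ (x i)) (fun x i => σ (x i))
  · intro x hx
    simp only [Finset.mem_coe, mem_fixedWords] at hx ⊢
    intro i
    exact (hσ _).mp (by simpa using hx i)
  · intro x hx
    simp only [Finset.mem_coe, mem_fixedWords] at hx ⊢
    intro i
    exact (hσ _).mpr (hx i)
  · intro x _; funext i; simp
  · intro x _; funext i; simp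

lemma Q_conj (σ g₁ g₂ h : Equiv.Perm (Fin k))
    (hσ : ∀ a, g₂ (σ a) = σ a ↔ g₁ a = a) :
    Q n k g₁ h = Q n k g₂ (σ * h * σ⁻¹) := by
  unfold Q
  apply Finset.sum_nbij' (fun x i => σ (x i)) (fun x i => σ⁻¹ (x i))
  · intro x hx
    simp only [Finset.mem_inter, mem_fixedWords] at hx ⊢
    refine ⟨fun i => (hσ _).mpr (hx.1 i), fun i => ?_⟩
    simp [Equiv.Perm.mul_apply, hx.2 i]
  · intro x hx
    simp only [Finset.mem_inter, mem_fixedWords] at hx ⊢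
    refine ⟨fun i => (hσ _).mp (by simpa using hx.1 i), fun i => ?_⟩
    have := hx.2 i
    simp only [Equiv.Perm.mul_apply] at this
    apply σ.injective
    simpa using this
  · intro x _; funext i; simp
  · intro x _; funext i; simp
  · intro x hx
    rw [fixedWords_card_eq n k σ g₁ g₂ hσ, stabWord_card_comp]

/-- In the value-permutation model, `Q` is strongly lumpable with respect to the partition of
`S_k*` by the number of fixed symbols: the row-sum over `{h : f(h) = s}` depends on `g ∈ S_k*`
only through `f(g)`. -/
theorem value_model_lumpable_by_fixcount (hn : 1 ≤ n) (hk : 1 ≤ k)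
    (g₁ g₂ : Equiv.Perm (Fin k))
    (hg₁ : 1 ≤ numFix k g₁) (hg₂ : 1 ≤ numFix k g₂)
    (hfix : numFix k g₁ = numFix k g₂)
    (s : ℕ) (hs : 1 ≤ s) :
    (∑ h ∈ Finset.univ.filter (fun h : Equiv.Perm (Fin k) => numFix k h = s), Q n k g₁ h)
      = ∑ h ∈ Finset.univ.filter (fun h : Equiv.Perm (Fin k) => numFix k h = s), Q n k g₂ h := by
  classical
  have hcard : Fintype.card {a : Fin k // g₁ a = a} = Fintype.card {a : Fin k // g₂ a = a} := by
    rw [Fintype.card_subtype, Fintype.card_subtype]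
    exact hfix
  let e : {a : Fin k // g₁ a = a} ≃ {a : Fin k // g₂ a = a} := Fintype.equivOfCardEq hcard
  let σ : Equiv.Perm (Fin k) := e.extendSubtype
  have hσ : ∀ a, g₂ (σ a) = σ a ↔ g₁ a = a := by
    intro a
    constructor
    · intro h
      by_contra hng
      exact e.extendSubtype_not_mem a hng h
    · intro h
      exact e.extendSubtype_mem a h
  apply Finset.sum_nbij' (fun h => σ * h * σ⁻¹) (fun h => σ⁻¹ * h * σ)
  · intro h hh
    simp only [Finset.mem_filter, Finset.mem_univ, true_and] at hh ⊢
    rw [numFix_conj k σ h]; exact hh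
  · intro h hh
    simp only [Finset.mem_filter, Finset.mem_univ, true_and] at hh ⊢
    have heq : σ⁻¹ * h * σ = σ⁻¹ * h * (σ⁻¹)⁻¹ := by group
    rw [heq, numFix_conj k σ⁻¹ h]; exact hh
  · intro h _; group
  · intro h _; group
  · intro h _
    exact Q_conj n k σ g₁ g₂ h hσ

end
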